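/- Let L be the combinatorial graph Laplacian of a connected weighted graph on vertex set V, and let V_1 ⊊ V with V_1 and V_1^c nonempty and |V_1| ≥ 2. Then Kron reduction preserves resistance distances: for all i, j ∈ V_1, (δ_i − δ_j)ᵀ L† (δ_i − δ_j) = (δ_i − δ_j)ᵀ (K(L,V_1))† (δ_i − δ_j), where L† and (K(L,V_1))† denote Moore–Penrose pseudoinverses and δ_i is the standard basis vector supported at vertex i (indexed within V_1 on the right-hand side). -/

import Mathlib

open Matrix

noncomputable def deg {n : Type*} [Fintype n] (W : Matrix n n ℝ) (i : n) : ℝ := ∑ j, W i j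

noncomputable def lap {n : Type*} [Fintype n] [DecidableEq n] (W : Matrix n n ℝ) :
    Matrix n n ℝ :=
  Matrix.diagonal (deg W) - W

def IsConn {n : Type*} (W : Matrix n n ℝ) : Prop :=
  ∀ i j : n, Relation.ReflTransGen (fun a b => 0 < W a b) i j

def IsBipartiteWith {n : Type*} (W : Matrix n n ℝ) (V1 : Set n) : Prop :=
  ∀ i j, 0 < W i j → (i ∈ V1 ↔ j ∉ V1)

open Classical in
noncomputable def sortedEigs {n : Type*} [Fintype n] [DecidableEq n] (A : Matrix n n ℝ) :
    Fin (Fintype.card n) → ℝ :=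
  if h : A.IsHermitian then
    (fun i => h.eigenvalues ((Fintype.equivFin n).symm i)) ∘
      ⇑(Tuple.sort fun i => h.eigenvalues ((Fintype.equivFin n).symm i))
  else 0

noncomputable def kron {n : Type*} [Fintype n] [DecidableEq n] (L : Matrix n n ℝ)
    (V1 : Finset n) : Matrix ↥V1 ↥V1 ℝ :=
  L.submatrix (Subtype.val : ↥V1 → n) (Subtype.val : ↥V1 → n) -
    L.submatrix (Subtype.val : ↥V1 → n) (Subtype.val : ↥(V1ᶜ) → n) *
      (L.submatrix (Subtype.val : ↥(V1ᶜ) → n) (Subtype.val : ↥(V1ᶜ) → n))⁻¹ *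
      L.submatrix (Subtype.val : ↥(V1ᶜ) → n) (Subtype.val : ↥V1 → n)

noncomputable def wred {m : Type*} [DecidableEq m] (K : Matrix m m ℝ) : Matrix m m ℝ :=
  Matrix.of fun i j => if i = j then 0 else -K i j

open Classical in
/-- The Moore–Penrose pseudoinverse of a real matrix (defined via its characterizing
Penrose equations). -/
noncomputable def pinv {m n : Type*} [Fintype m] [Fintype n] (A : Matrix m n ℝ) :
    Matrix n m ℝ :=
  if h : ∃ X : Matrix n m ℝ,
      A * X * A = A ∧ X * A * X = X ∧ (A * X)ᵀ = A * X ∧ (X * A)ᵀ = X * A then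
    h.choose
  else 0

section basic
variable {n : Type*} [Fintype n] [DecidableEq n] (W : Matrix n n ℝ)

lemma lap_symm (hsymm : W.IsSymm) : (lap W)ᵀ = lap W := by
  unfold lap
  rw [transpose_sub, diagonal_transpose, hsymm]

lemma lap_mulVec_one : lap W *ᵥ (fun _ => (1:ℝ)) = 0 := by
  funext a
  simp [lap, sub_mulVec, mulVec, dotProduct, Matrix.diagonal_apply, deg,
    Finset.sum_ite_eq, Pi.sub_apply]

lemma lap_quad2 (hsymm : W.IsSymm) (x : n → ℝ) :
    2 * (x ⬝ᵥ (lap W *ᵥ x)) = ∑ i, ∑ j, W i j * (x i - x j)^2 := by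
  have hW : ∀ i j, W j i = W i j := fun i j => by
    conv_lhs => rw [← hsymm]
    rfl
  have h1 : x ⬝ᵥ (lap W *ᵥ x)
      = (∑ i, ∑ j, W i j * (x i * x i)) - ∑ i, ∑ j, W i j * (x i * x j) := by
    unfold lap
    rw [sub_mulVec, dotProduct_sub]
    congr 1
    · rw [dotProduct]
      simp_rw [mulVec_diagonal]
      refine Finset.sum_congr rfl fun i _ => ?_
      rw [deg, Finset.sum_mul, Finset.mul_sum]
      exact Finset.sum_congr rfl fun j _ => by ring
    · rw [dotProduct]
      refine Finset.sum_congr rfl fun i _ => ?_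
      rw [mulVec, dotProduct, Finset.mul_sum]
      exact Finset.sum_congr rfl fun j _ => by ring
  have hS : ∑ i, ∑ j, W i j * (x j * x j) = ∑ i, ∑ j, W i j * (x i * x i) := by
    rw [Finset.sum_comm]
    exact Finset.sum_congr rfl fun j _ => Finset.sum_congr rfl fun i _ => by rw [hW]
  have h2 : ∑ i, ∑ j, W i j * (x i - x j)^2
      = (∑ i, ∑ j, W i j * (x i * x i)) + (∑ i, ∑ j, W i j * (x j * x j))
        - 2 * ∑ i, ∑ j, W i j * (x i * x j) := by
    rw [Finset.mul_sum, ← Finset.sum_add_distrib, ← Finset.sum_sub_distrib]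
    refine Finset.sum_congr rfl fun i _ => ?_
    rw [Finset.mul_sum, ← Finset.sum_add_distrib, ← Finset.sum_sub_distrib]
    exact Finset.sum_congr rfl fun j _ => by ring
  rw [h1, h2, hS]; ring

lemma lap_psd (hsymm : W.IsSymm) (hnonneg : ∀ i j, 0 ≤ W i j) (x : n → ℝ) :
    0 ≤ x ⬝ᵥ (lap W *ᵥ x) := by
  have h := lap_quad2 W hsymm x
  nlinarith [Finset.sum_nonneg (fun i (_ : i ∈ Finset.univ) =>
    Finset.sum_nonneg (fun j (_ : j ∈ Finset.univ) =>
      mul_nonneg (hnonneg i j) (sq_nonneg (x i - x j))))]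

lemma lap_ker (hsymm : W.IsSymm) (hnonneg : ∀ i j, 0 ≤ W i j) (hconn : IsConn W)
    (x : n → ℝ) (h0 : x ⬝ᵥ (lap W *ᵥ x) = 0) : ∀ i j, x i = x j := by
  have hsum : ∑ i, ∑ j, W i j * (x i - x j)^2 = 0 := by
    rw [← lap_quad2 W hsymm x, h0, mul_zero]
  have hterm : ∀ i j : n, 0 < W i j → x i = x j := by
    intro i j hij
    have h1 := (Finset.sum_eq_zero_iff_of_nonneg (fun i _ =>
      Finset.sum_nonneg (fun j _ => mul_nonneg (hnonneg i j) (sq_nonneg _)))).mp hsum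
      i (Finset.mem_univ i)
    have h2 := (Finset.sum_eq_zero_iff_of_nonneg (fun j _ =>
      mul_nonneg (hnonneg i j) (sq_nonneg _))).mp h1 j (Finset.mem_univ j)
    have h3 : (x i - x j)^2 = 0 := by
      rcases mul_eq_zero.mp h2 with h | h
      · exact absurd h (ne_of_gt hij)
      · exact h
    have := pow_eq_zero_iff (n := 2) (by norm_num) |>.mp h3
    linarith [sub_eq_zero.mp this]
  intro i j
  induction hconn i j with
  | refl => rfl
  | tail _ hbc ih => exact ih.trans (hterm _ _ hbc)

end basic

section blocks
variable {n : Type*} [Fintype n] [DecidableEq n]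

lemma split_sum (V1 : Finset n) (f : n → ℝ) :
    ∑ k, f k = (∑ a : ↥V1, f a.1) + ∑ b : ↥(V1ᶜ), f b.1 := by
  rw [Finset.sum_coe_sort, Finset.sum_coe_sort, Finset.sum_add_sum_compl]

lemma mulVec_split (L : Matrix n n ℝ) (V1 : Finset n) (x : n → ℝ) (a : n) :
    (L *ᵥ x) a = (∑ b : ↥V1, L a b.1 * x b.1) + ∑ b : ↥(V1ᶜ), L a b.1 * x b.1 := by
  rw [mulVec, dotProduct, split_sum V1 (fun k => L a k * x k)]

lemma submatrix_mulVec_apply (L : Matrix n n ℝ) {m m' : Type*} [Fintype m'] (f : m → n)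
    (g : m' → n) (x : m' → ℝ) (a : m) :
    (L.submatrix f g *ᵥ x) a = ∑ b : m', L (f a) (g b) * x b := by
  rw [mulVec, dotProduct]; rfl

lemma schur_solve (L : Matrix n n ℝ) (V1 : Finset n)
    (hdet : IsUnit (L.submatrix (Subtype.val : ↥(V1ᶜ) → n) (Subtype.val : ↥(V1ᶜ) → n)).det)
    (x e : n → ℝ) (hLx : L *ᵥ x = e) (he : ∀ a, a ∉ V1 → e a = 0) :
    kron L V1 *ᵥ (fun a : ↥V1 => x a.1) = fun a : ↥V1 => e a.1 := by
  have step1 : (L.submatrix (Subtype.val : ↥(V1ᶜ) → n) (Subtype.val : ↥(V1ᶜ) → n)) *ᵥ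
      (fun b : ↥(V1ᶜ) => x b.1)
      = -((L.submatrix (Subtype.val : ↥(V1ᶜ) → n) (Subtype.val : ↥V1 → n)) *ᵥ
          (fun a : ↥V1 => x a.1)) := by
    funext b
    have hb : (b : n) ∉ V1 := Finset.mem_compl.mp b.2
    have h0 : (L *ᵥ x) b.1 = 0 := by rw [hLx]; exact he b.1 hb
    rw [mulVec_split L V1 x b.1] at h0
    rw [submatrix_mulVec_apply, Pi.neg_apply, submatrix_mulVec_apply]
    linarith [h0]
  have step2 : (L.submatrix (Subtype.val : ↥(V1ᶜ) → n) (Subtype.val : ↥(V1ᶜ) → n))⁻¹ *ᵥ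
      ((L.submatrix (Subtype.val : ↥(V1ᶜ) → n) (Subtype.val : ↥V1 → n)) *ᵥ
        (fun a : ↥V1 => x a.1)) = -(fun b : ↥(V1ᶜ) => x b.1) := by
    rw [← neg_neg ((L.submatrix (Subtype.val : ↥(V1ᶜ) → n) (Subtype.val : ↥V1 → n)) *ᵥ
        (fun a : ↥V1 => x a.1)), ← step1, mulVec_neg, mulVec_mulVec,
      Matrix.nonsing_inv_mul _ hdet, one_mulVec]
  funext a
  rw [kron, sub_mulVec, Matrix.mul_assoc, ← mulVec_mulVec, ← mulVec_mulVec, step2,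
    mulVec_neg, Pi.sub_apply, Pi.neg_apply, sub_neg_eq_add,
    submatrix_mulVec_apply, submatrix_mulVec_apply, ← hLx, mulVec_split L V1 x a.1]

lemma kron_mulVec_one (L : Matrix n n ℝ) (V1 : Finset n)
    (hdet : IsUnit (L.submatrix (Subtype.val : ↥(V1ᶜ) → n) (Subtype.val : ↥(V1ᶜ) → n)).det)
    (h1 : L *ᵥ (fun _ => (1:ℝ)) = 0) :
    kron L V1 *ᵥ (fun _ => (1:ℝ)) = 0 := by
  have := schur_solve L V1 hdet (fun _ => 1) 0 h1 (fun a _ => rfl)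
  exact this

lemma kron_symm (L : Matrix n n ℝ) (V1 : Finset n) (hL : Lᵀ = L) :
    (kron L V1)ᵀ = kron L V1 := by
  unfold kron
  rw [transpose_sub, transpose_mul, transpose_mul, transpose_submatrix,
    transpose_submatrix, transpose_submatrix, transpose_nonsing_inv, transpose_submatrix, hL,
    Matrix.mul_assoc]

lemma kron_quad (L : Matrix n n ℝ) (V1 : Finset n)
    (hdet : IsUnit (L.submatrix (Subtype.val : ↥(V1ᶜ) → n) (Subtype.val : ↥(V1ᶜ) → n)).det)
    (x : ↥V1 → ℝ) :
    ∃ y : n → ℝ, (∀ a : ↥V1, y a.1 = x a) ∧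
      x ⬝ᵥ (kron L V1 *ᵥ x) = y ⬝ᵥ (L *ᵥ y) := by
  classical
  set D := L.submatrix (Subtype.val : ↥(V1ᶜ) → n) (Subtype.val : ↥(V1ᶜ) → n) with hD
  set C := L.submatrix (Subtype.val : ↥(V1ᶜ) → n) (Subtype.val : ↥V1 → n) with hC
  set x2 : ↥(V1ᶜ) → ℝ := -(D⁻¹ *ᵥ (C *ᵥ x)) with hx2
  refine ⟨fun a => if h : a ∈ V1 then x ⟨a, h⟩ else x2 ⟨a, Finset.mem_compl.mpr h⟩, ?_, ?_⟩
  · exact fun a => dif_pos a.2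
  set y : n → ℝ := fun a => if h : a ∈ V1 then x ⟨a, h⟩ else x2 ⟨a, Finset.mem_compl.mpr h⟩
    with hy
  have hy1 : ∀ a : ↥V1, y a.1 = x a := fun a => by rw [hy]; exact dif_pos a.2
  have hy2 : ∀ b : ↥(V1ᶜ), y b.1 = x2 b := fun b => by
    rw [hy]
    have hb : (b : n) ∉ V1 := Finset.mem_compl.mp b.2
    exact dif_neg hb
  have hyx : (fun a : ↥V1 => y a.1) = x := funext hy1
  have hyx2 : (fun b : ↥(V1ᶜ) => y b.1) = x2 := funext hy2
  have hzero : ∀ b, b ∉ V1 → (L *ᵥ y) b = 0 := by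
    intro b hb
    have hb' : b ∈ V1ᶜ := Finset.mem_compl.mpr hb
    have : (L *ᵥ y) b = (C *ᵥ x) ⟨b, hb'⟩ + (D *ᵥ x2) ⟨b, hb'⟩ := by
      rw [mulVec_split L V1 y b, hC, hD, submatrix_mulVec_apply, submatrix_mulVec_apply]
      simp_rw [hy1, hy2]
    rw [this, hx2, mulVec_neg, mulVec_mulVec, Matrix.mul_nonsing_inv _ hdet, one_mulVec,
      Pi.neg_apply, add_neg_cancel]
  have hks := schur_solve L V1 hdet y (L *ᵥ y) rfl hzero
  rw [hyx] at hks
  rw [hks]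
  rw [dotProduct, dotProduct, split_sum V1 (fun k => y k * (L *ᵥ y) k)]
  have hzero2 : ∑ b : ↥(V1ᶜ), y b.1 * (L *ᵥ y) b.1 = 0 :=
    Finset.sum_eq_zero fun b _ => by rw [hzero b.1 (Finset.mem_compl.mp b.2), mul_zero]
  rw [hzero2, add_zero]
  exact Finset.sum_congr rfl fun a _ => by rw [hy1]

end blocks

section inv
variable {n : Type*} [Fintype n] [DecidableEq n]

lemma L22_det (W : Matrix n n ℝ) (hsymm : W.IsSymm) (hnonneg : ∀ i j, 0 ≤ W i j)
    (hconn : IsConn W) (V1 : Finset n) (hne : V1.Nonempty) :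
    IsUnit ((lap W).submatrix (Subtype.val : ↥(V1ᶜ) → n)
      (Subtype.val : ↥(V1ᶜ) → n)).det := by
  classical
  rw [isUnit_iff_ne_zero]
  intro hdet0
  obtain ⟨v, hv0, hMv⟩ := (Matrix.exists_mulVec_eq_zero_iff).mpr hdet0
  set y : n → ℝ := fun a => if h : a ∈ V1ᶜ then v ⟨a, h⟩ else 0 with hy
  have hyV1 : ∀ a ∈ V1, y a = 0 := fun a ha => dif_neg (by simpa using ha)
  have hyV2 : ∀ b : ↥(V1ᶜ), y b.1 = v b := fun b => dif_pos b.2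
  have hzero : ∀ b : ↥(V1ᶜ), (lap W *ᵥ y) b.1 = 0 := by
    intro b
    rw [mulVec_split (lap W) V1 y b.1]
    have h1 : ∑ a : ↥V1, lap W b.1 a.1 * y a.1 = 0 :=
      Finset.sum_eq_zero fun a _ => by rw [hyV1 a.1 a.2, mul_zero]
    have h2 : ∑ c : ↥(V1ᶜ), lap W b.1 c.1 * y c.1 = 0 := by
      have := congrFun hMv b
      rw [submatrix_mulVec_apply] at this
      simp only [Pi.zero_apply] at this
      rw [← this]
      exact Finset.sum_congr rfl fun c _ => by rw [hyV2]
    rw [h1, h2, add_zero]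
  have hq : y ⬝ᵥ (lap W *ᵥ y) = 0 := by
    rw [dotProduct, split_sum V1 (fun k => y k * (lap W *ᵥ y) k)]
    have h1 : ∑ a : ↥V1, y a.1 * (lap W *ᵥ y) a.1 = 0 :=
      Finset.sum_eq_zero fun a _ => by rw [hyV1 a.1 a.2, zero_mul]
    have h2 : ∑ b : ↥(V1ᶜ), y b.1 * (lap W *ᵥ y) b.1 = 0 :=
      Finset.sum_eq_zero fun b _ => by rw [hzero b, mul_zero]
    rw [h1, h2, add_zero]
  have hconst := lap_ker W hsymm hnonneg hconn y hq
  obtain ⟨a0, ha0⟩ := hne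
  apply hv0
  funext b
  have : y b.1 = y a0 := hconst b.1 a0
  rw [hyV2 b, hyV1 a0 ha0] at this
  simpa using this

lemma exists_good_pinv [Nonempty n]
    (A : Matrix n n ℝ) (hsym : Aᵀ = A) (h1 : A *ᵥ (fun _ => (1:ℝ)) = 0)
    (hpsd : ∀ x, 0 ≤ x ⬝ᵥ (A *ᵥ x))
    (hker : ∀ x, x ⬝ᵥ (A *ᵥ x) = 0 → ∀ i j, x i = x j) :
    (∃ X, A * X * A = A ∧ X * A * X = X ∧ (A * X)ᵀ = A * X ∧ (X * A)ᵀ = X * A) ∧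
    ∀ e : n → ℝ, (∑ i, e i) = 0 → ∃ u, A *ᵥ u = e := by
  classical
  set c : ℝ := (Fintype.card n : ℝ) with hc
  have hcpos : (0:ℝ) < c := by
    rw [hc]; exact_mod_cast Fintype.card_pos
  set P : Matrix n n ℝ := Matrix.of (fun _ _ => c⁻¹) with hP
  have hrow : ∀ i, ∑ k, A i k = 0 := by
    intro i
    have := congrFun h1 i
    simpa [mulVec, dotProduct] using this
  have hAP : A * P = 0 := by
    ext i j
    simp only [Matrix.mul_apply, hP, Matrix.of_apply, Matrix.zero_apply]
    rw [← Finset.sum_mul, hrow, zero_mul]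
  have hPsymm : Pᵀ = P := rfl
  have hPA : P * A = 0 := by
    have : (P * A)ᵀ = 0 := by rw [transpose_mul, hPsymm, hsym, hAP]
    calc P * A = ((P * A)ᵀ)ᵀ := by rw [transpose_transpose]
    _ = 0 := by rw [this]; rfl
  have hPP : P * P = P := by
    ext i j
    simp only [Matrix.mul_apply, hP, Matrix.of_apply, Finset.sum_const,
      Finset.card_univ, nsmul_eq_mul]
    rw [← hc]
    field_simp
  have quadP : ∀ v : n → ℝ, v ⬝ᵥ (P *ᵥ v) = c⁻¹ * (∑ i, v i)^2 := by
    intro v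
    simp only [dotProduct, mulVec, hP, Matrix.of_apply]
    rw [← Finset.sum_mul, ← Finset.mul_sum]
    ring
  set M : Matrix n n ℝ := A + P with hM
  have hMdet : IsUnit M.det := by
    rw [isUnit_iff_ne_zero]
    intro hdet0
    obtain ⟨v, hv0, hMv⟩ := (Matrix.exists_mulVec_eq_zero_iff).mpr hdet0
    have hq : v ⬝ᵥ (A *ᵥ v) + c⁻¹ * (∑ i, v i)^2 = 0 := by
      rw [← quadP v, ← dotProduct_add, ← add_mulVec, ← hM, hMv, dotProduct_zero]
    have h1 : 0 ≤ v ⬝ᵥ (A *ᵥ v) := hpsd v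
    have h2 : 0 ≤ c⁻¹ * (∑ i, v i)^2 :=
      mul_nonneg (le_of_lt (inv_pos.mpr hcpos)) (sq_nonneg _)
    have hq1 : v ⬝ᵥ (A *ᵥ v) = 0 := by linarith
    have hq2 : (∑ i, v i) = 0 := by
      have : c⁻¹ * (∑ i, v i)^2 = 0 := by linarith
      have h3 : (∑ i, v i)^2 = 0 := by
        rcases mul_eq_zero.mp this with h | h
        · exact absurd h (ne_of_gt (inv_pos.mpr hcpos))
        · exact h
      exact pow_eq_zero_iff (by norm_num) |>.mp h3
    have hconst := hker v hq1
    obtain ⟨i0⟩ := ‹Nonempty n›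
    have hvall : ∀ i, v i = v i0 := fun i => hconst i i0
    have : ∑ i, v i = c * v i0 := by
      rw [Finset.sum_congr rfl (fun i _ => hvall i), Finset.sum_const,
        Finset.card_univ, nsmul_eq_mul, hc]
    have hvi0 : v i0 = 0 := by
      rw [this] at hq2
      rcases mul_eq_zero.mp hq2 with h | h
      · exact absurd h (ne_of_gt hcpos)
      · exact h
    exact hv0 (funext fun i => by rw [hvall i, hvi0]; rfl)
  have hMP : M * P = P := by rw [hM, add_mul, hAP, hPP, zero_add]
  have hPM : P * M = P := by rw [hM, mul_add, hPA, hPP, zero_add]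
  have hMinvP : M⁻¹ * P = P := by
    calc M⁻¹ * P = M⁻¹ * (M * P) := by rw [hMP]
    _ = (M⁻¹ * M) * P := by rw [Matrix.mul_assoc]
    _ = P := by rw [Matrix.nonsing_inv_mul _ hMdet, Matrix.one_mul]
  have hPMinv : P * M⁻¹ = P := by
    calc P * M⁻¹ = (P * M) * M⁻¹ := by rw [hPM]
    _ = P * (M * M⁻¹) := by rw [Matrix.mul_assoc]
    _ = P := by rw [Matrix.mul_nonsing_inv _ hMdet, Matrix.mul_one]
  have hAM : A = M - P := by rw [hM, add_sub_cancel_right]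
  have hAX : A * (M⁻¹ - P) = 1 - P := by
    rw [hAM, Matrix.sub_mul, Matrix.mul_sub, Matrix.mul_sub,
      Matrix.mul_nonsing_inv _ hMdet, hMP, hPMinv, hPP, sub_self, sub_zero]
  have hXA : (M⁻¹ - P) * A = 1 - P := by
    rw [hAM, Matrix.mul_sub, Matrix.sub_mul, Matrix.sub_mul,
      Matrix.nonsing_inv_mul _ hMdet, hPM, hMinvP, hPP, sub_self, sub_zero]
  constructor
  · refine ⟨M⁻¹ - P, ?_, ?_, ?_, ?_⟩
    · rw [hAX, Matrix.sub_mul, Matrix.one_mul, hPA, sub_zero]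
    · rw [hXA, Matrix.sub_mul, Matrix.one_mul, Matrix.mul_sub, hPMinv, hPP,
        sub_self, sub_zero]
    · rw [hAX, transpose_sub, transpose_one, hPsymm]
    · rw [hXA, transpose_sub, transpose_one, hPsymm]
  · intro e he
    refine ⟨M⁻¹ *ᵥ e, ?_⟩
    rw [mulVec_mulVec, hAM, Matrix.sub_mul, Matrix.mul_nonsing_inv _ hMdet, hPMinv,
      sub_mulVec, one_mulVec]
    have : P *ᵥ e = 0 := by
      funext i
      simp only [mulVec, hP, Matrix.of_apply, dotProduct, Pi.zero_apply]
      rw [← Finset.mul_sum, he, mul_zero]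
    rw [this, sub_zero]

end inv

lemma pinv_spec {m n : Type*} [Fintype m] [Fintype n] (A : Matrix m n ℝ)
    (h : ∃ X : Matrix n m ℝ,
      A * X * A = A ∧ X * A * X = X ∧ (A * X)ᵀ = A * X ∧ (X * A)ᵀ = X * A) :
    A * pinv A * A = A ∧ pinv A * A * pinv A = pinv A ∧
      (A * pinv A)ᵀ = A * pinv A ∧ (pinv A * A)ᵀ = pinv A * A := by
  rw [pinv, dif_pos h]
  exact h.choose_spec


/-- Kron reduction preserves resistance distances between kept vertices. -/
theorem kron_reduction_preserves_resistance_distance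
    {N : ℕ} (W : Matrix (Fin N) (Fin N) ℝ)
    (hsymm : W.IsSymm) (hnonneg : ∀ i j, 0 ≤ W i j) (hdiag : ∀ i, W i i = 0)
    (hconn : IsConn W) (V1 : Finset (Fin N)) (hcard : 2 ≤ V1.card) (h2 : V1ᶜ.Nonempty) :
    ∀ i j : ↥V1,
      (Pi.single i.1 (1 : ℝ) - Pi.single j.1 1) ⬝ᵥ
          (pinv (lap W) *ᵥ (Pi.single i.1 (1 : ℝ) - Pi.single j.1 1)) =
        (Pi.single i (1 : ℝ) - Pi.single j 1) ⬝ᵥ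
          (pinv (kron (lap W) V1) *ᵥ (Pi.single i (1 : ℝ) - Pi.single j 1)) := by
  intro i j
  have hV1ne : V1.Nonempty := Finset.card_pos.mp (by omega)
  obtain ⟨a0, ha0⟩ := hV1ne
  haveI : Nonempty (Fin N) := ⟨a0⟩
  haveI : Nonempty ↥V1 := ⟨⟨a0, ha0⟩⟩
  set L := lap W with hLdef
  have hLsym : Lᵀ = L := lap_symm W hsymm
  have hL1 : L *ᵥ (fun _ => (1:ℝ)) = 0 := lap_mulVec_one W
  have hLpsd := lap_psd W hsymm hnonneg
  have hLker := lap_ker W hsymm hnonneg hconn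
  have hdet := L22_det W hsymm hnonneg hconn V1 ⟨a0, ha0⟩
  obtain ⟨hLex, hLsolve⟩ := exists_good_pinv L hLsym hL1 hLpsd hLker
  set K := kron L V1 with hKdef
  have hKsym : Kᵀ = K := kron_symm L V1 hLsym
  have hK1v1 : K *ᵥ (fun _ => (1:ℝ)) = 0 := kron_mulVec_one L V1 hdet hL1
  have hKpsd : ∀ x, 0 ≤ x ⬝ᵥ (K *ᵥ x) := fun x => by
    obtain ⟨y, _, hq⟩ := kron_quad L V1 hdet x
    rw [hKdef, hq]; exact hLpsd y
  have hKker : ∀ x, x ⬝ᵥ (K *ᵥ x) = 0 → ∀ a b, x a = x b := by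
    intro x hx a b
    obtain ⟨y, hy, hq⟩ := kron_quad L V1 hdet x
    rw [hKdef, hq] at hx
    have := hLker y hx
    rw [← hy a, ← hy b]
    exact this a.1 b.1
  obtain ⟨hKex, -⟩ := exists_good_pinv K hKsym hK1v1 hKpsd hKker
  obtain ⟨hLP1, hLP2, hLP3, hLP4⟩ := pinv_spec L hLex
  obtain ⟨hKP1, hKP2, hKP3, hKP4⟩ := pinv_spec K hKex
  set e : Fin N → ℝ := Pi.single i.1 (1:ℝ) - Pi.single j.1 1 with he
  have hesum : ∑ k, e k = 0 := by
    rw [he]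
    simp [Pi.sub_apply, Finset.sum_sub_distrib, Finset.sum_pi_single']
  obtain ⟨u, hu⟩ := hLsolve e hesum
  set x := pinv L *ᵥ e with hx
  have hLxe : L *ᵥ x = e := by
    rw [hx, ← hu, mulVec_mulVec, mulVec_mulVec, hLP1]
  have he0 : ∀ a, a ∉ V1 → e a = 0 := by
    intro a ha
    have hai : a ≠ i.1 := fun h => ha (h ▸ i.2)
    have haj : a ≠ j.1 := fun h => ha (h ▸ j.2)
    rw [he, Pi.sub_apply, Pi.single_eq_of_ne hai, Pi.single_eq_of_ne haj, sub_zero]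
  have hK1v : K *ᵥ (fun a : ↥V1 => x a.1) = fun a : ↥V1 => e a.1 :=
    schur_solve L V1 hdet x e hLxe he0
  set eh : ↥V1 → ℝ := Pi.single i (1:ℝ) - Pi.single j 1 with heh
  have hehe : (fun a : ↥V1 => e a.1) = eh := by
    funext a
    rw [he, heh]
    simp only [Pi.sub_apply, Pi.single_apply, Subtype.ext_iff]
  set x1 : ↥V1 → ℝ := fun a => x a.1 with hx1
  have hKx1 : K *ᵥ x1 = eh := by rw [← hehe]; exact hK1v
  set y := pinv K *ᵥ eh with hy
  have hKy : K *ᵥ y = eh := by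
    rw [hy, ← hKx1, mulVec_mulVec, mulVec_mulVec, hKP1]
  have hKz : K *ᵥ (y - x1) = 0 := by rw [mulVec_sub, hKy, hKx1, sub_self]
  have hez : eh ⬝ᵥ (y - x1) = 0 := by
    rw [← hKx1, dotProduct_comm, dotProduct_mulVec, ← hKsym, vecMul_transpose, hKz,
      zero_dotProduct]
  have hstep1 : e ⬝ᵥ x = x i.1 - x j.1 := by
    rw [he, sub_dotProduct, single_dotProduct, single_dotProduct, one_mul, one_mul]
  have hstep2 : eh ⬝ᵥ y = x i.1 - x j.1 := by
    have hsplit : eh ⬝ᵥ y = eh ⬝ᵥ x1 + eh ⬝ᵥ (y - x1) := by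
      rw [dotProduct_sub]; ring
    rw [hsplit, hez, add_zero, heh, sub_dotProduct, single_dotProduct, single_dotProduct,
      one_mul, one_mul, hx1]
  rw [hstep1, hstep2]
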